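/- arXiv:1008.0627 — 3 statements merged into one kernel-verified Lean document; each statement's English description precedes it below -/
import Mathlib

section
/- If f : ℝ → ℂ is continuously differentiable with f, f' ∈ L²(ℝ), and δ > 0, then the L² norm of the local oscillation satisfies ‖M^δ f‖_{L²} ≤ √2 · δ · ‖f'‖_{L²}. -/
open MeasureTheory Real
open scoped ENNReal NNReal

/-- Cauchy–Schwarz for interval integrals of continuous nonnegative functions. -/
lemma cs_aux {a b : ℝ} (hab : a ≤ b) {g : ℝ → ℝ} (hg : Continuous g)
    (hgnn : ∀ t, 0 ≤ g t) :
    ∫ t in a..b, g t ≤ Real.sqrt (b - a) * Real.sqrt (∫ t in a..b, g t ^ 2) := by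
  have hμ : IsFiniteMeasure (volume.restrict (Set.Ioc a b)) := by
    constructor
    rw [Measure.restrict_apply_univ]
    simp [Real.volume_Ioc]
  have hpq : Real.HolderConjugate 2 2 := Real.holderConjugate_iff.mpr ⟨one_lt_two, by norm_num⟩
  have h1 : MemLp (fun _ : ℝ => (1 : ℝ)) (ENNReal.ofReal 2)
      (volume.restrict (Set.Ioc a b)) := memLp_const 1
  have hg2 : MemLp g (ENNReal.ofReal 2) (volume.restrict (Set.Ioc a b)) := by
    have : (ENNReal.ofReal 2) = (2 : ℝ≥0∞) := by norm_num
    rw [this, memLp_two_iff_integrable_sq hg.aestronglyMeasurable.restrict]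
    exact (hg.pow 2).integrableOn_Ioc
  have := integral_mul_le_Lp_mul_Lq_of_nonneg (μ := volume.restrict (Set.Ioc a b)) hpq
    (Filter.Eventually.of_forall fun _ => zero_le_one)
    (Filter.Eventually.of_forall fun t => hgnn t) h1 hg2
  simp only [one_mul] at this
  rw [intervalIntegral.integral_of_le hab, intervalIntegral.integral_of_le hab]
  refine this.trans ?_
  have e1 : ∫ t in Set.Ioc a b, (1 : ℝ) ^ (2 : ℝ) = b - a := by
    simp [Real.volume_Ioc, ENNReal.toReal_ofReal (sub_nonneg.mpr hab), hab]
  have e2 : ∀ t, g t ^ (2 : ℝ) = g t ^ 2 := fun t => by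
    rw [show (2 : ℝ) = ((2 : ℕ) : ℝ) by norm_num, Real.rpow_natCast]
  rw [e1]
  simp only [e2]
  rw [Real.sqrt_eq_rpow, Real.sqrt_eq_rpow]

/-- If `f : ℝ → ℂ` is continuously differentiable with
`f, f' ∈ L²(ℝ)` and `δ > 0`, then the `L²` norm of the local oscillation
`M^δ f(x) = sup_{|u| ≤ δ} |f(x+u) − f(x)|` satisfies
`‖M^δ f‖_{L²} ≤ √2 · δ · ‖f'‖_{L²}`. -/
theorem stmt1 (f : ℝ → ℂ) (hf : ContDiff ℝ 1 f)
    (hf2 : MemLp f 2 (volume : Measure ℝ))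
    (hf' : MemLp (deriv f) 2 (volume : Measure ℝ))
    (δ : ℝ) (hδ : 0 < δ) :
    eLpNorm (fun x => ⨆ u : Set.Icc (-δ) δ, ‖f (x + (u : ℝ)) - f x‖) 2 volume
      ≤ ENNReal.ofReal (Real.sqrt 2 * δ) * eLpNorm (deriv f) 2 volume := by
  have hdf : Continuous (deriv f) := hf.continuous_deriv le_rfl
  have hdiff : Differentiable ℝ f := hf.differentiable one_ne_zero
  have hgc : Continuous fun t => ‖deriv f t‖ := hdf.norm
  have hg2c : Continuous fun t => ‖deriv f t‖ ^ 2 := hgc.pow 2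
  set H : ℝ → ℝ := fun x => ∫ t in (x - δ)..(x + δ), ‖deriv f t‖ ^ 2 with hH
  have hHnn : ∀ x, 0 ≤ H x := fun x =>
    intervalIntegral.integral_nonneg (by linarith) (fun t _ => sq_nonneg _)
  -- pointwise bound on increments
  have key : ∀ x a b, x - δ ≤ a → a ≤ b → b ≤ x + δ → b - a ≤ δ →
      ‖f b - f a‖ ≤ Real.sqrt δ * Real.sqrt (H x) := by
    intro x a b hxa hab hbx hlen
    have hftc : ∫ t in a..b, deriv f t = f b - f a :=
      intervalIntegral.integral_deriv_eq_sub (fun t _ => hdiff t)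
        (hdf.intervalIntegrable a b)
    rw [← hftc]
    calc ‖∫ t in a..b, deriv f t‖ ≤ ∫ t in a..b, ‖deriv f t‖ :=
          intervalIntegral.norm_integral_le_integral_norm hab
      _ ≤ Real.sqrt (b - a) * Real.sqrt (∫ t in a..b, ‖deriv f t‖ ^ 2) :=
          cs_aux hab hgc (fun t => norm_nonneg _)
      _ ≤ Real.sqrt δ * Real.sqrt (H x) := by
          apply mul_le_mul (Real.sqrt_le_sqrt hlen) (Real.sqrt_le_sqrt ?_)
            (Real.sqrt_nonneg _) (Real.sqrt_nonneg _)
          exact intervalIntegral.integral_mono_interval hxa hab hbx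
            (Filter.Eventually.of_forall fun t => sq_nonneg _)
            (hg2c.intervalIntegrable _ _)
  set B : ℝ → ℝ := fun x => Real.sqrt δ * Real.sqrt (H x) with hB
  have hBnn : ∀ x, 0 ≤ B x := fun x => mul_nonneg (Real.sqrt_nonneg _) (Real.sqrt_nonneg _)
  haveI : Nonempty (Set.Icc (-δ) δ) := ⟨⟨0, by constructor <;> linarith⟩⟩
  have hFB : ∀ x, (⨆ u : Set.Icc (-δ) δ, ‖f (x + (u : ℝ)) - f x‖) ≤ B x := by
    intro x
    apply ciSup_le
    rintro ⟨u, hu1, hu2⟩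
    rcases le_total 0 u with h0 | h0
    · exact key x x (x + u) (by linarith) (by linarith) (by linarith) (by linarith)
    · rw [norm_sub_rev]
      exact key x (x + u) x (by linarith) (by linarith) (by linarith) (by linarith)
  have hFnn : ∀ x, 0 ≤ ⨆ u : Set.Icc (-δ) δ, ‖f (x + (u : ℝ)) - f x‖ := fun x =>
    Real.iSup_nonneg fun u => norm_nonneg _
  have step1 : eLpNorm (fun x => ⨆ u : Set.Icc (-δ) δ, ‖f (x + (u : ℝ)) - f x‖) 2 volume
      ≤ eLpNorm B 2 volume := by
    apply eLpNorm_mono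
    intro x
    rw [Real.norm_of_nonneg (hFnn x), Real.norm_of_nonneg (hBnn x)]
    exact hFB x
  refine step1.trans ?_
  -- now compute eLpNorm B
  set G : ℝ → ℝ≥0∞ := fun t => ENNReal.ofReal (‖deriv f t‖ ^ 2) with hG
  have hGm : Measurable G := (hg2c.measurable).ennreal_ofReal
  set A : ℝ≥0∞ := ∫⁻ t, G t with hA
  have hHofReal : ∀ x, ENNReal.ofReal (H x) = ∫⁻ t in Set.Ioc (x - δ) (x + δ), G t := by
    intro x
    show ENNReal.ofReal (∫ t in (x - δ)..(x + δ), ‖deriv f t‖ ^ 2) = _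
    rw [intervalIntegral.integral_of_le (by linarith : x - δ ≤ x + δ)]
    exact ofReal_integral_eq_lintegral_ofReal (hg2c.integrableOn_Ioc)
      (Filter.Eventually.of_forall fun t => sq_nonneg _)
  -- Fubini computation
  have swap : ∫⁻ x, ∫⁻ t in Set.Ioc (x - δ) (x + δ), G t = ENNReal.ofReal (2 * δ) * A := by
    have hSm : MeasurableSet {p : ℝ × ℝ | p.1 - δ < p.2 ∧ p.2 ≤ p.1 + δ} := by
      apply MeasurableSet.inter
      · exact measurableSet_lt (measurable_fst.sub measurable_const) measurable_snd
      · exact measurableSet_le measurable_snd (measurable_fst.add measurable_const)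
    have hψm : AEMeasurable (Function.uncurry fun x t =>
        ({p : ℝ × ℝ | p.1 - δ < p.2 ∧ p.2 ≤ p.1 + δ}.indicator (fun p => G p.2)) (x, t))
        ((volume : Measure ℝ).prod volume) := by
      apply Measurable.aemeasurable
      exact ((hGm.comp measurable_snd).indicator hSm).comp measurable_id
    calc ∫⁻ x, ∫⁻ t in Set.Ioc (x - δ) (x + δ), G t
        = ∫⁻ x, ∫⁻ t, ({p : ℝ × ℝ | p.1 - δ < p.2 ∧ p.2 ≤ p.1 + δ}.indicator
            (fun p => G p.2)) (x, t) := by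
          congr 1; ext x
          rw [← lintegral_indicator measurableSet_Ioc]
          refine lintegral_congr fun t => ?_
          by_cases h : t ∈ Set.Ioc (x - δ) (x + δ)
          · rw [Set.indicator_of_mem h, Set.indicator_of_mem]
            exact ⟨h.1, h.2⟩
          · rw [Set.indicator_of_notMem h, Set.indicator_of_notMem]
            intro hc; exact h ⟨hc.1, hc.2⟩
      _ = ∫⁻ t, ∫⁻ x, ({p : ℝ × ℝ | p.1 - δ < p.2 ∧ p.2 ≤ p.1 + δ}.indicator
            (fun p => G p.2)) (x, t) := lintegral_lintegral_swap hψm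
      _ = ∫⁻ t, G t * ENNReal.ofReal (2 * δ) := by
          congr 1; ext t
          have : ∀ x : ℝ, ({p : ℝ × ℝ | p.1 - δ < p.2 ∧ p.2 ≤ p.1 + δ}.indicator
              (fun p => G p.2)) (x, t) = (Set.Ico (t - δ) (t + δ)).indicator (fun _ => G t) x := by
            intro x
            by_cases h : x ∈ Set.Ico (t - δ) (t + δ)
            · rw [Set.indicator_of_mem h, Set.indicator_of_mem]
              obtain ⟨h1, h2⟩ := h
              exact ⟨by linarith, by linarith⟩
            · rw [Set.indicator_of_notMem h, Set.indicator_of_notMem]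
              intro ⟨h1, h2⟩
              exact h ⟨by linarith, by linarith⟩
          simp_rw [this]
          rw [lintegral_indicator measurableSet_Ico, setLIntegral_const, Real.volume_Ico]
          congr 1; ring_nf
      _ = ENNReal.ofReal (2 * δ) * A := by
          rw [lintegral_mul_const _ hGm, mul_comm]
  -- compute eLpNorm B 2 and eLpNorm (deriv f) 2
  have hBpt : ∀ x, ((‖B x‖₊ : ℝ≥0∞)) ^ (2 : ℝ) = ENNReal.ofReal δ *
      ∫⁻ t in Set.Ioc (x - δ) (x + δ), G t := by
    intro x
    rw [← enorm_eq_nnnorm, ← ofReal_norm_eq_enorm, Real.norm_of_nonneg (hBnn x),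
      ENNReal.ofReal_rpow_of_nonneg (hBnn x) (by norm_num : (0:ℝ) ≤ 2),
      show (B x) ^ (2 : ℝ) = B x ^ 2 by
        rw [show (2 : ℝ) = ((2 : ℕ) : ℝ) by norm_num, Real.rpow_natCast],
      show B x ^ 2 = δ * H x by
        rw [hB]; rw [mul_pow, Real.sq_sqrt hδ.le, Real.sq_sqrt (hHnn x)],
      ENNReal.ofReal_mul hδ.le, hHofReal x]
  have hBe : eLpNorm B 2 volume = (ENNReal.ofReal δ * (ENNReal.ofReal (2 * δ) * A)) ^ (1/2 : ℝ) := by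
    rw [eLpNorm_eq_lintegral_rpow_enorm_toReal two_ne_zero ENNReal.ofNat_ne_top]
    congr 1
    · simp only [ENNReal.toReal_ofNat]
      calc ∫⁻ x, ((‖B x‖₊ : ℝ≥0∞)) ^ (2 : ℝ)
          = ∫⁻ x, ENNReal.ofReal δ * ∫⁻ t in Set.Ioc (x - δ) (x + δ), G t := by
            simp_rw [hBpt]
        _ = ENNReal.ofReal δ * ∫⁻ x, ∫⁻ t in Set.Ioc (x - δ) (x + δ), G t :=
            lintegral_const_mul' _ _ ENNReal.ofReal_ne_top
        _ = ENNReal.ofReal δ * (ENNReal.ofReal (2 * δ) * A) := by rw [swap]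
  have hfe : eLpNorm (deriv f) 2 volume = A ^ (1/2 : ℝ) := by
    rw [eLpNorm_eq_lintegral_rpow_enorm_toReal two_ne_zero ENNReal.ofNat_ne_top]
    congr 1
    · simp only [ENNReal.toReal_ofNat]
      congr 1; ext t
      rw [← ofReal_norm_eq_enorm,
        ENNReal.ofReal_rpow_of_nonneg (norm_nonneg _) (by norm_num : (0:ℝ) ≤ 2), hG]
      congr 1
      rw [show (2 : ℝ) = ((2 : ℕ) : ℝ) by norm_num, Real.rpow_natCast]
  rw [hBe, hfe]
  rw [← mul_assoc, ← ENNReal.ofReal_mul hδ.le,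
    ENNReal.mul_rpow_of_nonneg _ _ (by norm_num : (0:ℝ) ≤ 1/2),
    ENNReal.ofReal_rpow_of_nonneg (by positivity) (by norm_num : (0:ℝ) ≤ 1/2)]
  have : (δ * (2 * δ)) ^ (1/2 : ℝ) = Real.sqrt 2 * δ := by
    rw [← Real.sqrt_eq_rpow, show δ * (2 * δ) = 2 * δ ^ 2 by ring, Real.sqrt_mul (by norm_num),
      Real.sqrt_sq hδ.le]
  rw [this]
end

section
/- Let f ∈ L²(ℝ) be C¹ with f' ∈ L²(ℝ), let δ > 0, let (x_k)_{k∈ℤ} be an increasing sequence of reals with consecutive gaps at most δ, and let (I_k) be pairwise disjoint measurable sets with I_k ⊆ (x_k − δ/2, x_k + δ/2) and ⋃_k I_k = ℝ. Then ‖f − Σ_k f(x_k)·1_{I_k}‖_{L²} ≤ √2 · δ · ‖f'‖_{L²}. -/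
open MeasureTheory Real
open scoped ENNReal NNReal

/-- Let `f ∈ L²(ℝ)` be `C¹` with `f' ∈ L²(ℝ)`, `δ > 0`, let
`(x_k)_{k∈ℤ}` be an increasing sequence with consecutive gaps at most `δ`, and
let `(I_k)` be pairwise disjoint measurable sets with
`I_k ⊆ (x_k − δ/2, x_k + δ/2)` and `⋃_k I_k = ℝ`.  Then
`‖f − Σ_k f(x_k)·1_{I_k}‖_{L²} ≤ √2 · δ · ‖f'‖_{L²}`. -/
theorem stmt2 (f : ℝ → ℂ) (hf : ContDiff ℝ 1 f)
    (hf2 : MemLp f 2 (volume : Measure ℝ))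
    (hf' : MemLp (deriv f) 2 (volume : Measure ℝ))
    (δ : ℝ) (hδ : 0 < δ)
    (x : ℤ → ℝ) (hmono : StrictMono x)
    (hgap : ∀ k : ℤ, x (k + 1) - x k ≤ δ)
    (I : ℤ → Set ℝ) (hmeas : ∀ k, MeasurableSet (I k))
    (hdisj : Pairwise (Function.onFun Disjoint I))
    (hsub : ∀ k, I k ⊆ Set.Ioo (x k - δ/2) (x k + δ/2))
    (hcover : (⋃ k, I k) = Set.univ) :
    eLpNorm (fun t => f t - ∑' k : ℤ, Set.indicator (I k) (fun _ => f (x k)) t) 2 volume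
      ≤ ENNReal.ofReal (Real.sqrt 2 * δ) * eLpNorm (deriv f) 2 volume := by
  classical
  set J : ℤ → Set ℝ := fun k => Set.Ioo (x k - δ/2) (x k + δ/2) with hJ
  have hfd : Differentiable ℝ f := hf.differentiable one_ne_zero
  have hcont' : Continuous (deriv f) := hf.continuous_deriv le_rfl
  have md : Measurable fun s : ℝ => (‖deriv f s‖₊ : ℝ≥0∞) :=
    hcont'.measurable.nnnorm.coe_nnreal_ennreal
  have md2 : Measurable fun s : ℝ => (‖deriv f s‖₊ : ℝ≥0∞) ^ (2:ℝ) :=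
    md.pow_const _
  set A : ℤ → ℝ≥0∞ := fun k => ∫⁻ s in J k, (‖deriv f s‖₊ : ℝ≥0∞) ^ (2:ℝ) with hA
  set B : ℝ≥0∞ := ∫⁻ s, (‖deriv f s‖₊ : ℝ≥0∞) ^ (2:ℝ) with hB
  set F : ℝ → ℂ := fun t => f t - ∑' k : ℤ, Set.indicator (I k) (fun _ => f (x k)) t with hF
  -- tsum collapses on each `I k`
  have htsum : ∀ k, ∀ t ∈ I k,
      (∑' j : ℤ, Set.indicator (I j) (fun _ => f (x j)) t) = f (x k) := by
    intro k t ht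
    rw [tsum_eq_single k]
    · exact Set.indicator_of_mem ht _
    · intro j hj
      refine Set.indicator_of_notMem (fun htj => ?_) _
      exact Set.disjoint_left.1 (hdisj hj) htj ht
  -- pointwise squared bound on each `I k`
  have key : ∀ k, ∀ t ∈ I k,
      (‖F t‖₊ : ℝ≥0∞) ^ (2:ℝ) ≤ ENNReal.ofReal δ * A k := by
    intro k t ht
    have hFt : F t = f t - f (x k) := by rw [hF]; simp only; rw [htsum k t ht]
    have hxkJ : x k ∈ J k := by constructor <;> simp <;> linarith
    have htJ : t ∈ J k := hsub k ht
    have hSJ : Set.uIoc (x k) t ⊆ J k := by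
      refine subset_trans Set.Ioc_subset_Icc_self ?_
      exact Set.OrdConnected.uIcc_subset Set.ordConnected_Ioo hxkJ htJ
    -- step a : enorm bound via FTC
    have heq : f t - f (x k) = ∫ s in (x k)..t, deriv f s :=
      (intervalIntegral.integral_deriv_eq_sub (fun y _ => hfd y)
        (hcont'.intervalIntegrable _ _)).symm
    have hint : IntegrableOn (deriv f) (Set.uIoc (x k) t) volume :=
      intervalIntegrable_iff.1 (hcont'.intervalIntegrable _ _)
    have ha : (‖F t‖₊ : ℝ≥0∞) ≤ ∫⁻ s in Set.uIoc (x k) t, (‖deriv f s‖₊ : ℝ≥0∞) := by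
      have h1 : ‖F t‖ ≤ ∫ s in Set.uIoc (x k) t, ‖deriv f s‖ := by
        rw [hFt, heq]
        exact intervalIntegral.norm_integral_le_integral_norm_uIoc
      calc (‖F t‖₊ : ℝ≥0∞) = ENNReal.ofReal ‖F t‖ := (ofReal_norm _).symm
        _ ≤ ENNReal.ofReal (∫ s in Set.uIoc (x k) t, ‖deriv f s‖) := ENNReal.ofReal_le_ofReal h1
        _ = ∫⁻ s in Set.uIoc (x k) t, (‖deriv f s‖₊ : ℝ≥0∞) :=
          ofReal_integral_norm_eq_lintegral_enorm hint
    -- step b : Cauchy-Schwarz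
    have hconj : (2:ℝ).HolderConjugate 2 := Real.HolderConjugate.two_two
    have hb : (∫⁻ s in Set.uIoc (x k) t, (‖deriv f s‖₊ : ℝ≥0∞)) ≤
        (A k) ^ (1/2 : ℝ) * (ENNReal.ofReal δ) ^ (1/2 : ℝ) := by
      have hcs := ENNReal.lintegral_mul_le_Lp_mul_Lq
        ((volume : Measure ℝ).restrict (Set.uIoc (x k) t)) hconj
        md.aemeasurable (aemeasurable_const (b := (1:ℝ≥0∞)))
      simp only [Pi.mul_apply, mul_one, ENNReal.one_rpow, lintegral_const,
        Measure.restrict_apply MeasurableSet.univ, Set.univ_inter, one_mul] at hcs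
      refine hcs.trans (mul_le_mul ?_ ?_ zero_le zero_le)
      · exact ENNReal.rpow_le_rpow (lintegral_mono_set hSJ) (by norm_num)
      · refine ENNReal.rpow_le_rpow ?_ (by norm_num)
        refine le_trans (measure_mono hSJ) ?_
        rw [hJ]
        simp only [Real.volume_Ioo]
        apply ENNReal.ofReal_le_ofReal; linarith
    -- combine and square
    calc (‖F t‖₊ : ℝ≥0∞) ^ (2:ℝ)
        ≤ ((A k) ^ (1/2 : ℝ) * (ENNReal.ofReal δ) ^ (1/2 : ℝ)) ^ (2:ℝ) :=
          ENNReal.rpow_le_rpow (ha.trans hb) (by norm_num)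
      _ = ENNReal.ofReal δ * A k := by
          rw [ENNReal.mul_rpow_of_nonneg _ _ (by norm_num), ← ENNReal.rpow_mul,
            ← ENNReal.rpow_mul]
          norm_num [mul_comm]
  -- decompose full integral over the I k
  have hdecomp : (∫⁻ t, (‖F t‖₊ : ℝ≥0∞) ^ (2:ℝ)) = ∑' k, ∫⁻ t in I k, (‖F t‖₊ : ℝ≥0∞) ^ (2:ℝ) := by
    rw [← lintegral_iUnion hmeas hdisj, hcover, Measure.restrict_univ]
  have hstep : ∀ k, (∫⁻ t in I k, (‖F t‖₊ : ℝ≥0∞) ^ (2:ℝ)) ≤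
      ENNReal.ofReal δ * (A k * volume (I k)) := by
    intro k
    calc (∫⁻ t in I k, (‖F t‖₊ : ℝ≥0∞) ^ (2:ℝ))
        ≤ ∫⁻ _ in I k, ENNReal.ofReal δ * A k := setLIntegral_mono' (hmeas k) (key k)
      _ = ENNReal.ofReal δ * A k * volume (I k) := setLIntegral_const _ _
      _ = ENNReal.ofReal δ * (A k * volume (I k)) := by ring
  -- overlap bound : Σ A k * vol (I k) ≤ ofReal (2δ) * B
  have hoverlap : (∑' k, A k * volume (I k)) ≤ ENNReal.ofReal (2*δ) * B := by
    have hrw : ∀ k, A k * volume (I k) =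
        ∫⁻ s, (J k).indicator (fun _ => volume (I k)) s * (‖deriv f s‖₊ : ℝ≥0∞) ^ (2:ℝ) := by
      intro k
      have hIfin : volume (I k) ≠ ⊤ := by
        refine ((measure_mono (hsub k)).trans_lt ?_).ne
        rw [Real.volume_Ioo]; exact ENNReal.ofReal_lt_top
      symm
      calc ∫⁻ s, (J k).indicator (fun _ => volume (I k)) s * (‖deriv f s‖₊ : ℝ≥0∞) ^ (2:ℝ)
          = ∫⁻ s, (J k).indicator (fun s => volume (I k) * (‖deriv f s‖₊ : ℝ≥0∞) ^ (2:ℝ)) s := by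
            refine lintegral_congr fun s => ?_
            by_cases hs : s ∈ J k <;> simp [hs]
        _ = ∫⁻ s in J k, volume (I k) * (‖deriv f s‖₊ : ℝ≥0∞) ^ (2:ℝ) :=
            lintegral_indicator measurableSet_Ioo _
        _ = volume (I k) * A k := lintegral_const_mul' _ _ hIfin
        _ = A k * volume (I k) := mul_comm _ _
    calc (∑' k, A k * volume (I k))
        = ∫⁻ s, ∑' k, (J k).indicator (fun _ => volume (I k)) s * (‖deriv f s‖₊ : ℝ≥0∞) ^ (2:ℝ) := by
          rw [tsum_congr hrw]
          exact (lintegral_tsum fun k =>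
            ((measurable_const.indicator measurableSet_Ioo).mul md2).aemeasurable).symm
      _ ≤ ∫⁻ s, ENNReal.ofReal (2*δ) * (‖deriv f s‖₊ : ℝ≥0∞) ^ (2:ℝ) := by
          refine lintegral_mono fun s => ?_
          rw [ENNReal.tsum_mul_right]
          refine mul_le_mul_left ?_ _
          -- sum of vol (I k) over k with s ∈ J k is at most 2δ
          have hKsub : ∀ k, (if s ∈ J k then I k else ∅) ⊆ I k := by
            intro k
            by_cases h : s ∈ J k
            · rw [if_pos h]
            · rw [if_neg h]; exact Set.empty_subset _
          have h1 : ∀ k, (J k).indicator (fun _ => volume (I k)) s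
              = volume (if s ∈ J k then I k else ∅) := by
            intro k; by_cases h : s ∈ J k <;> simp [h]
          rw [tsum_congr h1, ← measure_iUnion (fun j k hjk => (hdisj hjk).mono (hKsub j) (hKsub k))
            (fun k => by by_cases h : s ∈ J k
                         · rw [if_pos h]; exact hmeas k
                         · rw [if_neg h]; exact MeasurableSet.empty)]
          have hsub2 : (⋃ k, if s ∈ J k then I k else ∅) ⊆ Set.Ioo (s - δ) (s + δ) := by
            rintro y hy
            obtain ⟨k, hyk⟩ := Set.mem_iUnion.1 hy
            by_cases h : s ∈ J k
            · rw [if_pos h] at hyk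
              have h1 := hsub k hyk
              rw [hJ] at h
              obtain ⟨ha1, ha2⟩ := h; obtain ⟨hb1, hb2⟩ := h1
              exact Set.mem_Ioo.2 ⟨by linarith, by linarith⟩
            · rw [if_neg h] at hyk; exact absurd hyk (Set.notMem_empty y)
          refine (measure_mono hsub2).trans ?_
          rw [Real.volume_Ioo]
          apply ENNReal.ofReal_le_ofReal; linarith
      _ = ENNReal.ofReal (2*δ) * B := lintegral_const_mul' _ _ ENNReal.ofReal_ne_top
  -- put everything together
  have htotal : (∫⁻ t, (‖F t‖₊ : ℝ≥0∞) ^ (2:ℝ)) ≤ ENNReal.ofReal (2*δ^2) * B := by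
    calc (∫⁻ t, (‖F t‖₊ : ℝ≥0∞) ^ (2:ℝ))
        = ∑' k, ∫⁻ t in I k, (‖F t‖₊ : ℝ≥0∞) ^ (2:ℝ) := hdecomp
      _ ≤ ∑' k, ENNReal.ofReal δ * (A k * volume (I k)) := ENNReal.tsum_le_tsum hstep
      _ = ENNReal.ofReal δ * ∑' k, A k * volume (I k) := ENNReal.tsum_mul_left
      _ ≤ ENNReal.ofReal δ * (ENNReal.ofReal (2*δ) * B) := mul_le_mul_right hoverlap _
      _ = ENNReal.ofReal (2*δ^2) * B := by
          rw [← mul_assoc, ← ENNReal.ofReal_mul hδ.le]; ring_nf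
  -- conclude
  have h2 : ((2:ℝ≥0∞)).toReal = (2:ℝ) := by norm_num
  rw [eLpNorm_eq_lintegral_rpow_enorm_toReal (by norm_num) (by norm_num),
    eLpNorm_eq_lintegral_rpow_enorm_toReal (by norm_num) (by norm_num), h2]
  calc (∫⁻ t, (‖F t‖₊ : ℝ≥0∞) ^ (2:ℝ)) ^ (1/(2:ℝ))
      ≤ (ENNReal.ofReal (2*δ^2) * B) ^ (1/(2:ℝ)) := ENNReal.rpow_le_rpow htotal (by norm_num)
    _ = ENNReal.ofReal (Real.sqrt 2 * δ) * B ^ (1/(2:ℝ)) := by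
        rw [ENNReal.mul_rpow_of_nonneg _ _ (by norm_num),
          ENNReal.ofReal_rpow_of_nonneg (by positivity) (by norm_num)]
        congr 1
        rw [← Real.sqrt_eq_rpow, Real.sqrt_mul (by norm_num), Real.sqrt_sq hδ.le]
end

section
/- Let G be the ax+b group with left Haar measure da db/a², let ε > 0, U_ε = {e^{t₁X₁}e^{t₂X₂} : |t_i| < ε}, points x_i with G ⊆ ⋃ x_iU_ε, and disjoint sets U_i ⊆ x_iU_ε with ⋃U_i = G. If f ∈ L²(G) is right differentiable up to order 2 with R^α f ∈ L²(G) for |α| ≤ 2, then ‖f − Σ_i f(x_i)1_{U_i}‖_{L²} ≤ C_ε (‖X₁f‖_{L²} + ‖X₂f‖_{L²} + ‖X₂X₁f‖_{L²}), where C_ε → 0 as ε → 0. -/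
open MeasureTheory Filter Topology
open Set
open scoped ENNReal NNReal
set_option maxHeartbeats 1000000

/-- Multiplication of the `ax+b` group, realized on pairs `(a,b)`. -/
def gmul (p q : ℝ × ℝ) : ℝ × ℝ := (p.1 * q.1, p.1 * q.2 + p.2)

/-- Left Haar measure `da db / a²` of the `ax+b` group. -/
noncomputable def haarAxB : Measure (ℝ × ℝ) :=
  ((volume : Measure (ℝ × ℝ)).restrict {p | 0 < p.1}).withDensity
    (fun p => ENNReal.ofReal (1 / p.1 ^ 2))

/-- Right derivative in the dilation direction `X₁`. -/
noncomputable def Rd1 (f : ℝ × ℝ → ℂ) (p : ℝ × ℝ) : ℂ :=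
  deriv (fun t : ℝ => f (gmul p (Real.exp t, 0))) 0

/-- Right derivative in the translation direction `X₂`. -/
noncomputable def Rd2 (f : ℝ × ℝ → ℂ) (p : ℝ × ℝ) : ℂ :=
  deriv (fun t : ℝ => f (gmul p (1, t))) 0

/-- The neighborhood `U_ε = {e^{t₁X₁}e^{t₂X₂} : |t₁|,|t₂| < ε}` of the identity. -/
def UsetAxB (ε : ℝ) : Set (ℝ × ℝ) :=
  {q | ∃ t₁ t₂ : ℝ, |t₁| < ε ∧ |t₂| < ε ∧ q = gmul (Real.exp t₁, 0) (1, t₂)}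




instance : SFinite haarAxB := by unfold haarAxB; infer_instance

lemma measurable_density : Measurable (fun p : ℝ × ℝ => ENNReal.ofReal (1 / p.1 ^ 2)) := by
  measurability

lemma measurable_gmulr (c d : ℝ) : Measurable (fun p : ℝ × ℝ => gmul p (c, d)) := by
  unfold gmul; fun_prop

lemma haar_lintegral (h : ℝ × ℝ → ℝ≥0∞) (hm : Measurable h) :
    ∫⁻ p, h p ∂haarAxB
      = ∫⁻ a in Set.Ioi (0:ℝ), ∫⁻ b, h (a, b) * ENNReal.ofReal (1 / a ^ 2) ∂volume ∂volume := by
  rw [haarAxB, lintegral_withDensity_eq_lintegral_mul _ measurable_density hm]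
  have hS : {p : ℝ × ℝ | 0 < p.1} = Set.Ioi (0:ℝ) ×ˢ (Set.univ : Set ℝ) := by
    ext p; simp [Set.mem_prod]
  rw [Measure.volume_eq_prod, hS, ← Measure.prod_restrict, Measure.restrict_univ]
  rw [lintegral_prod _ (by exact ((measurable_density.mul hm).comp measurable_id).aemeasurable)]
  simp [mul_comm]

lemma haar_translate {h : ℝ × ℝ → ℝ≥0∞} (hm : Measurable h) {c : ℝ} (hc : 0 < c) (d : ℝ) :
    ∫⁻ p, h (gmul p (c, d)) ∂haarAxB = ENNReal.ofReal c * ∫⁻ p, h p ∂haarAxB := by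
  have hmT : Measurable fun p : ℝ × ℝ => h (gmul p (c, d)) := hm.comp (measurable_gmulr c d)
  rw [haar_lintegral _ hmT, haar_lintegral h hm]
  set F : ℝ → ℝ≥0∞ := fun a => ∫⁻ b, h (a, b) ∂volume with hF
  have hFm : Measurable F := hm.lintegral_prod_right'
  have key : ∀ a : ℝ, ∫⁻ b, h (gmul (a, b) (c, d)) * ENNReal.ofReal (1 / a ^ 2) ∂volume
      = F (c * a) * ENNReal.ofReal (1 / a ^ 2) := by
    intro a
    have : ∀ b : ℝ, h (gmul (a, b) (c, d)) * ENNReal.ofReal (1 / a ^ 2)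
        = (fun b => h (a * c, b) * ENNReal.ofReal (1 / a ^ 2)) (a * d + b) := by
      intro b; simp [gmul]
    simp_rw [this]
    rw [lintegral_add_left_eq_self (fun b => h (a * c, b) * ENNReal.ofReal (1 / a ^ 2)) (a * d)]
    rw [lintegral_mul_const' _ _ (by simp), mul_comm a c]
  simp_rw [key]
  have keyR : ∀ a : ℝ, ∫⁻ b, h (a, b) * ENNReal.ofReal (1 / a ^ 2) ∂volume
      = F a * ENNReal.ofReal (1 / a ^ 2) := by
    intro a; rw [lintegral_mul_const' _ _ (by simp)]
  simp_rw [keyR]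
  set G : ℝ → ℝ≥0∞ := (Set.Ioi (0:ℝ)).indicator (fun a => F a * ENNReal.ofReal (1 / a ^ 2))
  have hGm : Measurable G :=
    ((hFm.mul (by measurability)).indicator measurableSet_Ioi)
  have step2 : ∀ a : ℝ, (Set.Ioi (0:ℝ)).indicator
      (fun a => F (c * a) * ENNReal.ofReal (1 / a ^ 2)) a
      = ENNReal.ofReal (c ^ 2) * G (c * a) := by
    intro a
    by_cases ha : 0 < a
    · have hca : 0 < c * a := mul_pos hc ha
      simp only [G, Set.indicator_of_mem (Set.mem_Ioi.mpr ha),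
        Set.indicator_of_mem (Set.mem_Ioi.mpr hca)]
      rw [← mul_assoc, mul_comm (ENNReal.ofReal (c ^ 2)) (F (c * a)), mul_assoc]
      congr 1
      rw [← ENNReal.ofReal_mul (by positivity)]
      congr 1
      field_simp
    · have hca : c * a ∉ Set.Ioi (0:ℝ) := by
        simp only [Set.mem_Ioi, not_lt]
        exact mul_nonpos_of_nonneg_of_nonpos hc.le (not_lt.mp ha)
      simp only [G, Set.indicator_of_notMem (show a ∉ Set.Ioi (0:ℝ) by simpa using ha),
        Set.indicator_of_notMem hca, mul_zero]
  calc ∫⁻ a in Set.Ioi (0:ℝ), F (c * a) * ENNReal.ofReal (1 / a ^ 2) ∂volume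
      = ∫⁻ a, (Set.Ioi (0:ℝ)).indicator
          (fun a => F (c * a) * ENNReal.ofReal (1 / a ^ 2)) a ∂volume := by
        exact (lintegral_indicator measurableSet_Ioi _).symm
    _ = ∫⁻ a, ENNReal.ofReal (c ^ 2) * G (c * a) ∂volume := by simp_rw [step2]
    _ = ENNReal.ofReal (c ^ 2) * ∫⁻ a, G (c * a) ∂volume := by
        have hGcm : Measurable fun a : ℝ => G (c * a) := hGm.comp (measurable_const_mul c)
        exact lintegral_const_mul _ hGcm
    _ = ENNReal.ofReal (c ^ 2) * (ENNReal.ofReal (1 / c) * ∫⁻ a, G a ∂volume) := by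
        congr 1
        rw [← lintegral_map hGm (measurable_const_mul c),
          Real.map_volume_mul_left (ne_of_gt hc), lintegral_smul_measure]
        congr 2
        rw [abs_inv, abs_of_pos hc, one_div]
    _ = ENNReal.ofReal c * ∫⁻ a, G a ∂volume := by
        rw [← mul_assoc, ← ENNReal.ofReal_mul (by positivity)]
        congr 2
        field_simp
    _ = ENNReal.ofReal c * ∫⁻ a in Set.Ioi (0:ℝ), F a * ENNReal.ofReal (1 / a ^ 2) ∂volume := by
        rw [lintegral_indicator measurableSet_Ioi _]

lemma sq_lintegral_le {s : Set ℝ} {g : ℝ → ℝ≥0∞} (hg : AEMeasurable g (volume.restrict s)) :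
    (∫⁻ x in s, g x) ^ (2:ℝ) ≤ volume s * ∫⁻ x in s, g x ^ (2:ℝ) := by
  have hconj : Real.HolderConjugate 2 2 := Real.HolderConjugate.two_two
  have h := ENNReal.lintegral_mul_le_Lp_mul_Lq (volume.restrict s) hconj hg
    (aemeasurable_const : AEMeasurable (fun _ => (1:ℝ≥0∞)) _)
  simp only [Pi.mul_apply, mul_one, ENNReal.one_rpow, lintegral_one,
    Measure.restrict_apply_univ] at h
  calc (∫⁻ x in s, g x) ^ (2:ℝ)
      ≤ ((∫⁻ x in s, g x ^ (2:ℝ)) ^ (1/(2:ℝ)) * (volume s) ^ (1/(2:ℝ))) ^ (2:ℝ) :=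
        ENNReal.rpow_le_rpow h (by norm_num)
    _ = volume s * ∫⁻ x in s, g x ^ (2:ℝ) := by
        rw [ENNReal.mul_rpow_of_nonneg _ _ (by norm_num), ← ENNReal.rpow_mul,
          ← ENNReal.rpow_mul]
        norm_num [mul_comm]

lemma ftc_bound {F F' : ℝ → ℂ} (hd : ∀ s, HasDerivAt F (F' s) s) (hc : Continuous F')
    {t r : ℝ} (ht : |t| ≤ r) :
    (‖F 0 - F t‖₊ : ℝ≥0∞) ≤ ∫⁻ s in Set.Icc (-r) r, (‖F' s‖₊ : ℝ≥0∞) := by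
  have hr : 0 ≤ r := le_trans (abs_nonneg t) ht
  have hsub : Set.uIoc t 0 ⊆ Set.Icc (-r) r := by
    intro y hy
    rcases Set.mem_uIoc.mp hy with h | h
    · exact ⟨le_trans (neg_le_of_abs_le ht) h.1.le, le_trans h.2 hr⟩
    · exact ⟨le_trans (neg_nonpos_of_nonneg hr) h.1.le, le_trans h.2 (le_of_abs_le ht)⟩
  have hFTC : F 0 - F t = ∫ s in t..(0:ℝ), F' s :=
    (intervalIntegral.integral_eq_sub_of_hasDerivAt (fun x _ => hd x)
      (hc.intervalIntegrable t 0)).symm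
  have h1 : ‖F 0 - F t‖ ≤ ∫ s in Set.Icc (-r) r, ‖F' s‖ := by
    rw [hFTC]
    refine le_trans intervalIntegral.norm_integral_le_integral_norm_uIoc ?_
    refine setIntegral_mono_set (hc.norm.integrableOn_Icc) ?_ (HasSubset.Subset.eventuallyLE hsub)
    exact Filter.Eventually.of_forall fun y => norm_nonneg _
  calc (‖F 0 - F t‖₊ : ℝ≥0∞) = ENNReal.ofReal ‖F 0 - F t‖ := (ofReal_norm_eq_enorm _).symm
    _ ≤ ENNReal.ofReal (∫ s in Set.Icc (-r) r, ‖F' s‖) := ENNReal.ofReal_le_ofReal h1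
    _ = ∫⁻ s in Set.Icc (-r) r, ENNReal.ofReal ‖F' s‖ :=
        ofReal_integral_eq_lintegral_ofReal (hc.norm.integrableOn_Icc)
          (Filter.Eventually.of_forall fun y => norm_nonneg _)
    _ = ∫⁻ s in Set.Icc (-r) r, (‖F' s‖₊ : ℝ≥0∞) := by
        simp_rw [ofReal_norm_eq_enorm, enorm_eq_nnnorm]




lemma gmul_one (p : ℝ × ℝ) : gmul p (1, 0) = p := by simp [gmul]

lemma gmul_assoc (p q r : ℝ × ℝ) : gmul (gmul p q) r = gmul p (gmul q r) := by
  simp only [gmul, Prod.mk.injEq]; exact ⟨by ring, by ring⟩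

lemma cont_aux1 (p : ℝ × ℝ) : Continuous fun t : ℝ => gmul p (1, t) := by
  unfold gmul; fun_prop

lemma cont_aux2 (p : ℝ × ℝ) : Continuous fun t : ℝ => gmul p (Real.exp t, 0) := by
  unfold gmul; fun_prop

lemma pointwise_bound {f : ℝ × ℝ → ℂ}
    (hd1 : ∀ p s, HasDerivAt (fun t : ℝ => f (gmul p (Real.exp t, 0)))
      (Rd1 f (gmul p (Real.exp s, 0))) s)
    (hd2 : ∀ p s, HasDerivAt (fun t : ℝ => f (gmul p (1, t)))
      (Rd2 f (gmul p (1, s))) s)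
    (hd21 : ∀ p s, HasDerivAt (fun t : ℝ => Rd1 f (gmul p (1, t)))
      (Rd2 (Rd1 f) (gmul p (1, s))) s)
    (hc1 : Continuous (Rd1 f)) (hc2 : Continuous (Rd2 f))
    (hc21 : Continuous (Rd2 (Rd1 f)))
    {ε : ℝ} (hε : 0 < ε) {p z : ℝ × ℝ} {t₁ t₂ : ℝ}
    (h1 : |t₁| < ε) (h2 : |t₂| < ε)
    (hp : p = gmul z (gmul (Real.exp t₁, 0) (1, t₂))) :
    (‖f p - f z‖₊ : ℝ≥0∞) ≤
      (∫⁻ s in Set.Icc (-ε) ε, (‖Rd2 f (gmul p (1, s))‖₊ : ℝ≥0∞))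
      + ((∫⁻ u in Set.Icc (-ε) ε, (‖Rd1 f (gmul p (Real.exp u, 0))‖₊ : ℝ≥0∞))
        + ∫⁻ u in Set.Icc (-ε) ε, ∫⁻ v in Set.Icc (-(ε * Real.exp ε)) (ε * Real.exp ε),
            (‖Rd2 (Rd1 f) (gmul (gmul p (Real.exp u, 0)) (1, v))‖₊ : ℝ≥0∞)) := by
  set ρ := ε * Real.exp ε with hρ
  set q := gmul p (1, -t₂) with hq
  -- step A
  have hA : (‖f p - f q‖₊ : ℝ≥0∞) ≤
      ∫⁻ s in Set.Icc (-ε) ε, (‖Rd2 f (gmul p (1, s))‖₊ : ℝ≥0∞) := by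
    have := ftc_bound (F := fun t => f (gmul p (1, t)))
      (F' := fun s => Rd2 f (gmul p (1, s))) (hd2 p)
      (hc2.comp (cont_aux1 p)) (t := -t₂) (r := ε) (by rw [abs_neg]; exact h2.le)
    simpa [gmul_one] using this
  -- step B
  have hqz : gmul q (Real.exp (-t₁), 0) = z := by
    have he : Real.exp t₁ ≠ 0 := Real.exp_ne_zero t₁
    simp only [hq, hp, gmul, Real.exp_neg]
    field_simp
    rw [Prod.mk.injEq]
    exact ⟨rfl, by ring⟩
  have hB : (‖f q - f z‖₊ : ℝ≥0∞) ≤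
      ∫⁻ u in Set.Icc (-ε) ε, (‖Rd1 f (gmul q (Real.exp u, 0))‖₊ : ℝ≥0∞) := by
    have := ftc_bound (F := fun u => f (gmul q (Real.exp u, 0)))
      (F' := fun u => Rd1 f (gmul q (Real.exp u, 0))) (hd1 q)
      (hc1.comp (cont_aux2 q)) (t := -t₁) (r := ε) (by rw [abs_neg]; exact h1.le)
    simpa [Real.exp_zero, gmul_one, hqz] using this
  -- step C : pointwise in u
  have hC : ∀ u ∈ Set.Icc (-ε) ε,
      (‖Rd1 f (gmul q (Real.exp u, 0))‖₊ : ℝ≥0∞) ≤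
        (‖Rd1 f (gmul p (Real.exp u, 0))‖₊ : ℝ≥0∞)
        + ∫⁻ v in Set.Icc (-ρ) ρ,
            (‖Rd2 (Rd1 f) (gmul (gmul p (Real.exp u, 0)) (1, v))‖₊ : ℝ≥0∞) := by
    intro u hu
    set w := gmul p (Real.exp u, 0) with hw
    set r := -t₂ * Real.exp (-u) with hr
    have hwq : gmul w (1, r) = gmul q (Real.exp u, 0) := by
      simp only [hw, hq, hr, gmul, Real.exp_neg]
      have he : Real.exp u ≠ 0 := Real.exp_ne_zero u
      field_simp
      ring
    have hrρ : |r| ≤ ρ := by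
      rw [hr, abs_mul, abs_neg, Real.abs_exp, hρ]
      have h1' : Real.exp (-u) ≤ Real.exp ε := Real.exp_le_exp.mpr (by
        have := hu.1; linarith)
      exact mul_le_mul h2.le h1' (Real.exp_pos _).le hε.le
    have hftc := ftc_bound (F := fun v => Rd1 f (gmul w (1, v)))
      (F' := fun v => Rd2 (Rd1 f) (gmul w (1, v))) (hd21 w)
      (hc21.comp (cont_aux1 w)) (t := r) (r := ρ) hrρ
    have htr : (‖Rd1 f (gmul w (1, r))‖₊ : ℝ≥0∞) ≤
        (‖Rd1 f (gmul w (1, 0))‖₊ : ℝ≥0∞)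
        + (‖Rd1 f (gmul w (1, 0)) - Rd1 f (gmul w (1, r))‖₊ : ℝ≥0∞) := by
      rw [← ENNReal.coe_add]
      exact_mod_cast norm_le_norm_add_norm_sub (Rd1 f (gmul w (1, 0))) (Rd1 f (gmul w (1, r)))
    have hw0 : gmul w (1, 0) = w := gmul_one w
    rw [hwq, hw0] at hftc htr
    exact le_trans htr (add_le_add (le_refl _) hftc)
  -- combine B and C
  have hBC : (‖f q - f z‖₊ : ℝ≥0∞) ≤
      (∫⁻ u in Set.Icc (-ε) ε, (‖Rd1 f (gmul p (Real.exp u, 0))‖₊ : ℝ≥0∞))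
      + ∫⁻ u in Set.Icc (-ε) ε, ∫⁻ v in Set.Icc (-ρ) ρ,
          (‖Rd2 (Rd1 f) (gmul (gmul p (Real.exp u, 0)) (1, v))‖₊ : ℝ≥0∞) := by
    refine le_trans hB ?_
    have hmono : ∫⁻ u in Set.Icc (-ε) ε, (‖Rd1 f (gmul q (Real.exp u, 0))‖₊ : ℝ≥0∞)
        ≤ ∫⁻ u in Set.Icc (-ε) ε,
            ((‖Rd1 f (gmul p (Real.exp u, 0))‖₊ : ℝ≥0∞)
            + ∫⁻ v in Set.Icc (-ρ) ρ,
                (‖Rd2 (Rd1 f) (gmul (gmul p (Real.exp u, 0)) (1, v))‖₊ : ℝ≥0∞)) :=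
      lintegral_mono_ae ((ae_restrict_mem measurableSet_Icc).mono fun u hu => hC u hu)
    refine le_trans hmono (le_of_eq ?_)
    refine lintegral_add_left ?_ _
    exact (hc1.comp (cont_aux2 p)).measurable.enorm
  -- triangle
  calc (‖f p - f z‖₊ : ℝ≥0∞) ≤ (‖f p - f q‖₊ : ℝ≥0∞) + (‖f q - f z‖₊ : ℝ≥0∞) := by
        rw [← ENNReal.coe_add]
        have : f p - f z = (f p - f q) + (f q - f z) := by ring
        rw [this]
        exact_mod_cast nnnorm_add_le _ _
    _ ≤ _ := add_le_add hA hBC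

lemma sq_lintegral_le' {α : Type*} [MeasurableSpace α] (ν : Measure α) {g : α → ℝ≥0∞}
    (hg : AEMeasurable g ν) :
    (∫⁻ x, g x ∂ν) ^ (2:ℝ) ≤ ν Set.univ * ∫⁻ x, g x ^ (2:ℝ) ∂ν := by
  have hconj : Real.HolderConjugate 2 2 := Real.HolderConjugate.two_two
  have h := ENNReal.lintegral_mul_le_Lp_mul_Lq ν hconj hg
    (aemeasurable_const : AEMeasurable (fun _ => (1:ℝ≥0∞)) _)
  simp only [Pi.mul_apply, mul_one, ENNReal.one_rpow, lintegral_one] at h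
  calc (∫⁻ x, g x ∂ν) ^ (2:ℝ)
      ≤ ((∫⁻ x, g x ^ (2:ℝ) ∂ν) ^ (1/(2:ℝ)) * (ν Set.univ) ^ (1/(2:ℝ))) ^ (2:ℝ) :=
        ENNReal.rpow_le_rpow h (by norm_num)
    _ = ν Set.univ * ∫⁻ x, g x ^ (2:ℝ) ∂ν := by
        rw [ENNReal.mul_rpow_of_nonneg _ _ (by norm_num), ← ENNReal.rpow_mul,
          ← ENNReal.rpow_mul]
        norm_num [mul_comm]

lemma l2_bound_gen {α : Type*} [MeasurableSpace α] (ν : Measure α) [SFinite ν]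
    {g : ℝ × ℝ → ℂ} (hg : Continuous g) {c d : α → ℝ}
    (hc : Measurable c) (hd : Measurable d) (hcpos : ∀ y, 0 < c y) {M : ℝ}
    (hM : ∀ᵐ y ∂ν, c y ≤ M) :
    ∫⁻ p, (∫⁻ y, (‖g (gmul p (c y, d y))‖₊ : ℝ≥0∞) ∂ν) ^ (2:ℝ) ∂haarAxB
      ≤ ν Set.univ * (ν Set.univ * (ENNReal.ofReal M *
          ∫⁻ p, (‖g p‖₊ : ℝ≥0∞) ^ (2:ℝ) ∂haarAxB)) := by
  set D := ∫⁻ p, (‖g p‖₊ : ℝ≥0∞) ^ (2:ℝ) ∂haarAxB with hD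
  have hmk : Measurable fun z : (ℝ × ℝ) × α =>
      (‖g (gmul z.1 (c z.2, d z.2))‖₊ : ℝ≥0∞) ^ (2:ℝ) := by
    refine Measurable.pow_const ?_ _
    refine Measurable.coe_nnreal_ennreal (Measurable.nnnorm ?_)
    refine hg.measurable.comp ?_
    unfold gmul
    exact ((measurable_fst.fst.mul (hc.comp measurable_snd)).prodMk
      ((measurable_fst.fst.mul (hd.comp measurable_snd)).add measurable_fst.snd))
  have step1 : ∫⁻ p, (∫⁻ y, (‖g (gmul p (c y, d y))‖₊ : ℝ≥0∞) ∂ν) ^ (2:ℝ) ∂haarAxB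
      ≤ ν Set.univ * ∫⁻ p, ∫⁻ y, (‖g (gmul p (c y, d y))‖₊ : ℝ≥0∞) ^ (2:ℝ) ∂ν ∂haarAxB := by
    have hGm : Measurable fun p : ℝ × ℝ =>
        ∫⁻ y, (‖g (gmul p (c y, d y))‖₊ : ℝ≥0∞) ^ (2:ℝ) ∂ν := hmk.lintegral_prod_right'
    rw [← lintegral_const_mul _ hGm]
    refine lintegral_mono fun p => ?_
    exact sq_lintegral_le' ν (by
      have : Measurable fun y => (‖g (gmul p (c y, d y))‖₊ : ℝ≥0∞) := by
        refine Measurable.enorm (hg.measurable.comp ?_)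
        unfold gmul
        exact ((measurable_const.mul hc).prodMk ((measurable_const.mul hd).add
          measurable_const))
      exact this.aemeasurable)
  have step2 : ∫⁻ p, ∫⁻ y, (‖g (gmul p (c y, d y))‖₊ : ℝ≥0∞) ^ (2:ℝ) ∂ν ∂haarAxB
      = ∫⁻ y, ∫⁻ p, (‖g (gmul p (c y, d y))‖₊ : ℝ≥0∞) ^ (2:ℝ) ∂haarAxB ∂ν :=
    lintegral_lintegral_swap hmk.aemeasurable
  have step3 : ∀ᵐ y ∂ν, ∫⁻ p, (‖g (gmul p (c y, d y))‖₊ : ℝ≥0∞) ^ (2:ℝ) ∂haarAxB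
      ≤ ENNReal.ofReal M * D := by
    filter_upwards [hM] with y hy
    have := haar_translate (h := fun p => (‖g p‖₊ : ℝ≥0∞) ^ (2:ℝ))
      (hg.measurable.enorm.pow_const _) (hcpos y) (d y)
    rw [this]
    exact mul_le_mul_left (ENNReal.ofReal_le_ofReal hy) D
  calc ∫⁻ p, (∫⁻ y, (‖g (gmul p (c y, d y))‖₊ : ℝ≥0∞) ∂ν) ^ (2:ℝ) ∂haarAxB
      ≤ ν Set.univ * ∫⁻ y, ∫⁻ p, (‖g (gmul p (c y, d y))‖₊ : ℝ≥0∞) ^ (2:ℝ) ∂haarAxB ∂ν := by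
        rw [← step2]; exact step1
    _ ≤ ν Set.univ * ∫⁻ _, ENNReal.ofReal M * D ∂ν :=
        mul_le_mul_right (lintegral_mono_ae step3) _
    _ = ν Set.univ * (ν Set.univ * (ENNReal.ofReal M * D)) := by
        rw [lintegral_const]; ring

lemma haar_ae_pos : ∀ᵐ p ∂haarAxB, 0 < p.1 := by
  have hS : MeasurableSet {p : ℝ × ℝ | 0 < p.1} := measurable_fst measurableSet_Ioi
  rw [MeasureTheory.ae_iff]
  have : {p : ℝ × ℝ | ¬ 0 < p.1} = {p : ℝ × ℝ | 0 < p.1}ᶜ := rfl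
  rw [this, haarAxB, withDensity_apply _ hS.compl,
    Measure.restrict_restrict hS.compl, Set.compl_inter_self]
  simp

lemma final_helper {v M C : ℝ} (hv : 0 ≤ v) (hM : 0 ≤ M) (hC : 0 ≤ C)
    (h : v * v * M ≤ C ^ 2) {D X : ℝ≥0∞}
    (hX : X ≤ ENNReal.ofReal v * (ENNReal.ofReal v * (ENNReal.ofReal M * D))) :
    X ^ (1/2:ℝ) ≤ ENNReal.ofReal C * D ^ (1/2:ℝ) := by
  have h1 : X ≤ ENNReal.ofReal (C ^ 2) * D := by
    refine le_trans hX ?_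
    rw [← mul_assoc, ← mul_assoc, ← ENNReal.ofReal_mul hv,
      ← ENNReal.ofReal_mul (by positivity)]
    exact mul_le_mul_left (ENNReal.ofReal_le_ofReal h) D
  calc X ^ (1/2:ℝ) ≤ (ENNReal.ofReal (C ^ 2) * D) ^ (1/2:ℝ) :=
        ENNReal.rpow_le_rpow h1 (by norm_num)
    _ = ENNReal.ofReal C * D ^ (1/2:ℝ) := by
        rw [ENNReal.mul_rpow_of_nonneg _ _ (by norm_num),
          ENNReal.ofReal_rpow_of_nonneg (by positivity) (by norm_num)]
        congr 1
        rw [← Real.rpow_natCast C 2, ← Real.rpow_mul hC]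
        norm_num


lemma G3_repr {g : ℝ × ℝ → ℂ} (hg : Continuous g) {I J : Set ℝ} (p : ℝ × ℝ) :
    ∫⁻ u in I, ∫⁻ v in J, (‖g (gmul (gmul p (Real.exp u, 0)) (1, v))‖₊ : ℝ≥0∞)
      = ∫⁻ y, (‖g (gmul p (Real.exp y.1, Real.exp y.1 * y.2))‖₊ : ℝ≥0∞)
          ∂((volume.restrict I).prod (volume.restrict J)) := by
  have hm : AEMeasurable (fun y : ℝ × ℝ => (‖g
      (gmul p (Real.exp y.1, Real.exp y.1 * y.2))‖₊ : ℝ≥0∞))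
      ((volume.restrict I).prod (volume.restrict J)) := by
    refine Measurable.aemeasurable (Measurable.enorm (hg.measurable.comp ?_))
    unfold gmul
    apply Measurable.prodMk <;> fun_prop
  rw [lintegral_prod _ hm]
  congr 1
  funext u
  congr 1
  funext v
  rw [gmul_assoc]
  congr 2
  simp [gmul]

/-- **Lemma 2 for the `ax+b` group.** If `f ∈ L²(G)` is right
differentiable up to order 2 with `R^α f ∈ L²(G)` for `|α| ≤ 2`, points `x_i`
with `G ⊆ ⋃ x_iU_ε` and disjoint sets `U_i ⊆ x_iU_ε` covering `G`, then
`‖f − Σ_i f(x_i)1_{U_i}‖_{L²} ≤ C_ε(‖X₁f‖_{L²} + ‖X₂f‖_{L²} + ‖X₂X₁f‖_{L²})`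
with `C_ε → 0` as `ε → 0`. -/
theorem stmt17 :
    ∃ C : ℝ → ℝ, Tendsto C (𝓝[>] (0:ℝ)) (𝓝 0) ∧
      ∀ (ε : ℝ), 0 < ε →
      ∀ (x : ℕ → ℝ × ℝ) (Us : ℕ → Set (ℝ × ℝ)),
        (∀ i, 0 < (x i).1) →
        (∀ i, MeasurableSet (Us i)) →
        Pairwise (Function.onFun Disjoint Us) →
        (∀ i, Us i ⊆ gmul (x i) '' UsetAxB ε) →
        (⋃ i, Us i) = {p : ℝ × ℝ | 0 < p.1} →
      ∀ f : ℝ × ℝ → ℂ, Continuous f →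
        -- right differentiability of order 2
        (∀ p s, HasDerivAt (fun t : ℝ => f (gmul p (Real.exp t, 0)))
          (Rd1 f (gmul p (Real.exp s, 0))) s) →
        (∀ p s, HasDerivAt (fun t : ℝ => f (gmul p (1, t)))
          (Rd2 f (gmul p (1, s))) s) →
        (∀ p s, HasDerivAt (fun t : ℝ => Rd1 f (gmul p (1, t)))
          (Rd2 (Rd1 f) (gmul p (1, s))) s) →
        Continuous (Rd1 f) → Continuous (Rd2 f) → Continuous (Rd2 (Rd1 f)) →
        -- f and its derivatives up to order 2 lie in L²(G)
        MemLp f 2 haarAxB → MemLp (Rd1 f) 2 haarAxB →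
        MemLp (Rd2 f) 2 haarAxB → MemLp (Rd2 (Rd1 f)) 2 haarAxB →
        eLpNorm (fun p => f p - ∑' i, Set.indicator (Us i) (fun _ => f (x i)) p)
            2 haarAxB
          ≤ ENNReal.ofReal (C ε) *
              (eLpNorm (Rd1 f) 2 haarAxB + eLpNorm (Rd2 f) 2 haarAxB +
                eLpNorm (Rd2 (Rd1 f)) 2 haarAxB) := by
  refine ⟨fun ε => 4 * ε * Real.exp ε * (1 + ε * Real.exp ε), ?_, ?_⟩
  · have hcont : Continuous fun ε : ℝ => 4 * ε * Real.exp ε * (1 + ε * Real.exp ε) := by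
      fun_prop
    have h0 : (fun ε : ℝ => 4 * ε * Real.exp ε * (1 + ε * Real.exp ε)) 0 = 0 := by
      norm_num
    have := hcont.tendsto 0
    rw [show (4 * (0:ℝ) * Real.exp 0 * (1 + 0 * Real.exp 0)) = 0 by norm_num] at this
    exact tendsto_nhdsWithin_of_tendsto_nhds this
  intro ε hε x Us hx0 hUm hdisj hsub hcover f hcf hd1 hd2 hd21 hc1 hc2 hc21 hL0 hL1 hL2 hL3
  have hexp1 : (1:ℝ) ≤ Real.exp ε := Real.one_le_exp hε.le
  have hexppos : (0:ℝ) < Real.exp ε := Real.exp_pos ε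
  set E : ℝ := Real.exp ε with hE
  set C : ℝ := 4 * ε * E * (1 + ε * E) with hC
  have hCpos : 0 ≤ C := by positivity
  set ρ : ℝ := ε * E with hρ
  have hρpos : 0 < ρ := by positivity
  have hC4 : 4 * ε * E ≤ C := by rw [hC]; nlinarith
  have hC4' : 4 * ε * E * ρ ≤ C := by rw [hC]; nlinarith
  have scalar2 : (2 * ε) * (2 * ε) * 1 ≤ C ^ 2 := by
    nlinarith [mul_le_mul hC4 hC4 (by positivity) hCpos, sq_nonneg ε,
      mul_nonneg (mul_nonneg (sq_nonneg ε) hexppos.le) (by linarith : (0:ℝ) ≤ E - 1)]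
  have scalar1 : (2 * ε) * (2 * ε) * E ≤ C ^ 2 := by
    nlinarith [mul_le_mul hC4 hC4 (by positivity) hCpos,
      mul_nonneg (mul_nonneg (sq_nonneg ε) hexppos.le) (by linarith : (0:ℝ) ≤ 4 * E - 1)]
  have scalar3 : ((2 * ε) * (2 * ρ)) * ((2 * ε) * (2 * ρ)) * E ≤ C ^ 2 := by
    nlinarith [mul_le_mul hC4' hC4' (by positivity) hCpos,
      mul_nonneg (mul_nonneg (mul_nonneg (sq_nonneg ε) (sq_nonneg ρ)) hexppos.le)
        (by linarith : (0:ℝ) ≤ E - 1)]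
  set I : Set ℝ := Set.Icc (-ε) ε with hI
  set J : Set ℝ := Set.Icc (-ρ) ρ with hJ
  set G2 : (ℝ × ℝ) → ℝ≥0∞ := fun p => ∫⁻ s in I, (‖Rd2 f (gmul p (1, s))‖₊ : ℝ≥0∞) with hG2
  set G1 : (ℝ × ℝ) → ℝ≥0∞ :=
    fun p => ∫⁻ u in I, (‖Rd1 f (gmul p (Real.exp u, 0))‖₊ : ℝ≥0∞) with hG1
  set G3 : (ℝ × ℝ) → ℝ≥0∞ := fun p => ∫⁻ u in I, ∫⁻ v in J,
    (‖Rd2 (Rd1 f) (gmul (gmul p (Real.exp u, 0)) (1, v))‖₊ : ℝ≥0∞) with hG3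
  -- measurability
  have mG2 : Measurable G2 := by
    refine Measurable.lintegral_prod_right' (f := fun z : (ℝ × ℝ) × ℝ =>
      (‖Rd2 f (gmul z.1 (1, z.2))‖₊ : ℝ≥0∞)) ?_
    refine Measurable.enorm (hc2.measurable.comp ?_)
    unfold gmul
    exact (measurable_fst.fst.mul measurable_const).prodMk
      ((measurable_fst.fst.mul measurable_snd).add measurable_fst.snd)
  have mG1 : Measurable G1 := by
    refine Measurable.lintegral_prod_right' (f := fun z : (ℝ × ℝ) × ℝ =>
      (‖Rd1 f (gmul z.1 (Real.exp z.2, 0))‖₊ : ℝ≥0∞)) ?_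
    refine Measurable.enorm (hc1.measurable.comp ?_)
    unfold gmul
    exact (measurable_fst.fst.mul (Real.measurable_exp.comp measurable_snd)).prodMk
      ((measurable_fst.fst.mul measurable_const).add measurable_fst.snd)
  have mk3 : Measurable fun z : ((ℝ × ℝ) × ℝ) × ℝ =>
      (‖Rd2 (Rd1 f) (gmul (gmul z.1.1 (Real.exp z.1.2, 0)) (1, z.2))‖₊ : ℝ≥0∞) := by
    refine Measurable.enorm (hc21.measurable.comp ?_)
    unfold gmul
    apply Measurable.prodMk <;> fun_prop
  have mG3 : Measurable G3 := by
    refine Measurable.lintegral_prod_right' (f := fun z : (ℝ × ℝ) × ℝ =>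
      ∫⁻ v in J, (‖Rd2 (Rd1 f) (gmul (gmul z.1 (Real.exp z.2, 0)) (1, v))‖₊ : ℝ≥0∞)) ?_
    exact mk3.lintegral_prod_right'
  -- a.e. pointwise bound
  have hae : ∀ᵐ p ∂haarAxB,
      (‖f p - ∑' i, Set.indicator (Us i) (fun _ => f (x i)) p‖₊ : ℝ≥0∞)
        ≤ G2 p + (G1 p + G3 p) := by
    filter_upwards [haar_ae_pos] with p hp
    have hpU : p ∈ ⋃ i, Us i := by rw [hcover]; exact hp
    obtain ⟨i, hi⟩ := Set.mem_iUnion.mp hpU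
    have hts : (∑' j, Set.indicator (Us j) (fun _ => f (x j)) p) = f (x i) := by
      rw [tsum_eq_single i ?_]
      · simp [Set.indicator_of_mem hi]
      · intro j hji
        have hnj : p ∉ Us j := fun hj => Set.disjoint_left.mp (hdisj hji) hj hi
        simp [Set.indicator_of_notMem hnj]
    rw [hts]
    obtain ⟨u', hu', hpu⟩ := hsub i hi
    obtain ⟨t₁, t₂, h1, h2, rfl⟩ := hu'
    exact pointwise_bound hd1 hd2 hd21 hc1 hc2 hc21 hε h1 h2 hpu.symm
  -- rewrite eLpNorms
  simp only [eLpNorm_eq_lintegral_rpow_enorm_toReal two_ne_zero ENNReal.ofNat_ne_top,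
    ENNReal.toReal_ofNat, enorm_eq_nnnorm]
  set D1 := ∫⁻ p, (‖Rd1 f p‖₊ : ℝ≥0∞) ^ (2:ℝ) ∂haarAxB with hD1
  set D2 := ∫⁻ p, (‖Rd2 f p‖₊ : ℝ≥0∞) ^ (2:ℝ) ∂haarAxB with hD2
  set D3 := ∫⁻ p, (‖Rd2 (Rd1 f) p‖₊ : ℝ≥0∞) ^ (2:ℝ) ∂haarAxB with hD3
  -- step 1 : pointwise
  have hWle : ∫⁻ p, (‖f p - ∑' i, Set.indicator (Us i) (fun _ => f (x i)) p‖₊ : ℝ≥0∞) ^ (2:ℝ)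
        ∂haarAxB
      ≤ ∫⁻ p, (G2 p + (G1 p + G3 p)) ^ (2:ℝ) ∂haarAxB :=
    lintegral_mono_ae (hae.mono fun p h => ENNReal.rpow_le_rpow h (by norm_num))
  -- step 2 : Minkowski
  have hMink : (∫⁻ p, (G2 p + (G1 p + G3 p)) ^ (2:ℝ) ∂haarAxB) ^ (1/2:ℝ)
      ≤ (∫⁻ p, G2 p ^ (2:ℝ) ∂haarAxB) ^ (1/2:ℝ)
        + ((∫⁻ p, G1 p ^ (2:ℝ) ∂haarAxB) ^ (1/2:ℝ)
          + (∫⁻ p, G3 p ^ (2:ℝ) ∂haarAxB) ^ (1/2:ℝ)) := by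
    have h1 := ENNReal.lintegral_Lp_add_le (μ := haarAxB) mG2.aemeasurable
      (mG1.add mG3).aemeasurable one_le_two
    have h2 := ENNReal.lintegral_Lp_add_le (μ := haarAxB) mG1.aemeasurable
      mG3.aemeasurable one_le_two
    simp only [Pi.add_apply] at h1 h2
    exact le_trans h1 (add_le_add_right h2 _)
  -- step 3 : the three translation bounds
  have volI : (volume.restrict I) Set.univ = ENNReal.ofReal (2 * ε) := by
    rw [Measure.restrict_apply_univ, hI, Real.volume_Icc]
    congr 1; ring
  have volJ : (volume.restrict J) Set.univ = ENNReal.ofReal (2 * ρ) := by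
    rw [Measure.restrict_apply_univ, hJ, Real.volume_Icc]
    congr 1; ring
  have hB2 : (∫⁻ p, G2 p ^ (2:ℝ) ∂haarAxB) ^ (1/2:ℝ)
      ≤ ENNReal.ofReal C * D2 ^ (1/2:ℝ) := by
    refine final_helper (v := 2 * ε) (M := 1) (by positivity) zero_le_one hCpos
      ?_ (le_trans (l2_bound_gen (volume.restrict I) hc2
        (c := fun _ => (1:ℝ)) (d := fun s => s) measurable_const measurable_id
        (fun _ => one_pos) (Filter.Eventually.of_forall fun _ => le_refl 1)) ?_)
    · exact scalar2
    · rw [volI]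
  have hB1 : (∫⁻ p, G1 p ^ (2:ℝ) ∂haarAxB) ^ (1/2:ℝ)
      ≤ ENNReal.ofReal C * D1 ^ (1/2:ℝ) := by
    refine final_helper (v := 2 * ε) (M := Real.exp ε) (by positivity) hexppos.le hCpos
      ?_ (le_trans (l2_bound_gen (volume.restrict I) hc1
        (c := fun u => Real.exp u) (d := fun _ => (0:ℝ)) (M := Real.exp ε) Real.measurable_exp
        measurable_const (fun u => Real.exp_pos u) ?_) ?_)
    · exact scalar1
    · filter_upwards [ae_restrict_mem measurableSet_Icc] with u hu
      exact Real.exp_le_exp.mpr hu.2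
    · rw [volI]
  have hB3 : (∫⁻ p, G3 p ^ (2:ℝ) ∂haarAxB) ^ (1/2:ℝ)
      ≤ ENNReal.ofReal C * D3 ^ (1/2:ℝ) := by
    have hswap : ∫⁻ p, G3 p ^ (2:ℝ) ∂haarAxB
        = ∫⁻ p, (∫⁻ y, (‖Rd2 (Rd1 f)
            (gmul p (Real.exp y.1, Real.exp y.1 * y.2))‖₊ : ℝ≥0∞)
            ∂((volume.restrict I).prod (volume.restrict J))) ^ (2:ℝ) ∂haarAxB := by
      refine lintegral_congr fun p => ?_
      have h := G3_repr (g := Rd2 (Rd1 f)) hc21 (I := I) (J := J) p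
      rw [hG3]
      exact congrArg (fun z => z ^ (2:ℝ)) h
    have hν : ((volume.restrict I).prod (volume.restrict J)) Set.univ
        = ENNReal.ofReal ((2 * ε) * (2 * ρ)) := by
      rw [← Set.univ_prod_univ, Measure.prod_prod, Measure.restrict_apply_univ,
        Measure.restrict_apply_univ, hI, hJ, Real.volume_Icc, Real.volume_Icc,
        ← ENNReal.ofReal_mul (by linarith : (0:ℝ) ≤ ε - -ε)]
      congr 1; ring
    have hprod : (volume.restrict I).prod (volume.restrict J)
        = ((volume : Measure ℝ).prod volume).restrict (I ×ˢ J) :=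
      Measure.prod_restrict I J
    have hb := l2_bound_gen ((volume.restrict I).prod (volume.restrict J)) hc21
      (c := fun y : ℝ × ℝ => Real.exp y.1) (d := fun y : ℝ × ℝ => Real.exp y.1 * y.2)
      (M := Real.exp ε)
      (Real.measurable_exp.comp measurable_fst)
      ((Real.measurable_exp.comp measurable_fst).mul measurable_snd)
      (fun y => Real.exp_pos y.1) (by
        rw [hprod]
        filter_upwards [ae_restrict_mem (measurableSet_Icc.prod measurableSet_Icc)]
          with y hy
        exact Real.exp_le_exp.mpr hy.1.2)
    rw [hν] at hb
    refine final_helper (v := (2 * ε) * (2 * ρ)) (M := Real.exp ε)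
      (by positivity) hexppos.le hCpos scalar3 ?_
    exact le_trans (le_of_eq hswap) hb
  -- combine
  calc (∫⁻ p, (‖f p - ∑' i, Set.indicator (Us i) (fun _ => f (x i)) p‖₊ : ℝ≥0∞) ^ (2:ℝ)
        ∂haarAxB) ^ (1/2:ℝ)
      ≤ (∫⁻ p, (G2 p + (G1 p + G3 p)) ^ (2:ℝ) ∂haarAxB) ^ (1/2:ℝ) :=
        ENNReal.rpow_le_rpow hWle (by norm_num)
    _ ≤ (∫⁻ p, G2 p ^ (2:ℝ) ∂haarAxB) ^ (1/2:ℝ)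
        + ((∫⁻ p, G1 p ^ (2:ℝ) ∂haarAxB) ^ (1/2:ℝ)
          + (∫⁻ p, G3 p ^ (2:ℝ) ∂haarAxB) ^ (1/2:ℝ)) := hMink
    _ ≤ ENNReal.ofReal C * D2 ^ (1/2:ℝ)
        + (ENNReal.ofReal C * D1 ^ (1/2:ℝ) + ENNReal.ofReal C * D3 ^ (1/2:ℝ)) :=
        add_le_add hB2 (add_le_add hB1 hB3)
    _ = ENNReal.ofReal C * (D1 ^ (1/2:ℝ) + D2 ^ (1/2:ℝ) + D3 ^ (1/2:ℝ)) := by ring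
end
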